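/- Assume M = m_1+…+m_n is even and μ ∈ ℂ∖ℤ_{>0}. Then for every nonzero v ∈ V[0] there exist a unique sequence (ψ^k)_{k≥0} of vectors of V[0] with ψ^0 = v and a constant ε ∈ ℂ such that for every k ≥ 0: (πi/2)·(μ − 2k)²·ψ^k + (πi/8)·( Σ_{s,t=1}^n Ω_0^{(s,t)} )ψ^k − πi·Σ_{j=1}^k j·( Σ_{s,t=1}^n (Ω_{12}^{(s,t)} + Ω_{21}^{(s,t)}) )ψ^{k−j} = ε·ψ^k; moreover ε = πi·μ²/2. (This system is the coefficientwise form of the eigenvalue equation H_0·ψ = ε·ψ for the KZB operator H_0 = (1/4πi)(∂_{λ1}² + ∂_{λ2}²) + (πi/4)·Σ_{s,t}[ (1/2)Ω_0^{(s,t)} + (1/sin²(πλ))(Ω_{12}^{(s,t)} + Ω_{21}^{(s,t)}) ] applied to ψ = e^{πiμλ}·Σ_{k≥0} Λ^k ψ^k with λ = λ1 − λ2, Λ = e^{−2πiλ}, using ∂_{λ1}² + ∂_{λ2}² = 2∂_λ² on such functions and the expansion 1/sin²(πλ) = −4·Σ_{j≥1} j·Λ^j.) -/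
import Mathlib


open Complex Finset

namespace Paper

noncomputable section

variable {n : ℕ}

/-- The index set of the natural basis of `V = V_{m 0} ⊗ ⋯ ⊗ V_{m (n-1)}`:
the basis vector `v_{i_1} ⊗ ⋯ ⊗ v_{i_n}` corresponds to the index `(i_1,…,i_n)`. -/
abbrev Idx (m : Fin n → ℕ) := ∀ s : Fin n, Fin (m s + 1)

/-- The tensor product `V = V_{m 0} ⊗ ⋯ ⊗ V_{m (n-1)}` realized concretely as the space of
ℂ-valued functions on the index set of its natural basis. -/
abbrev TV (m : Fin n → ℕ) := Idx m → ℂ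

/-- The linear operator `f ↦ (i ↦ c i * f (g i))`; all the basic operators below are of
this form. -/
def mulShift {ι : Type*} (c : ι → ℂ) (g : ι → ι) : Module.End ℂ (ι → ℂ) where
  toFun f i := c i * f (g i)
  map_add' f h := by funext i; simp [mul_add]
  map_smul' a f := by
    funext i
    simp only [Pi.smul_apply, smul_eq_mul, RingHom.id_apply]
    ring

variable (m : Fin n → ℕ)

/-- `e11` acting in the `s`-th tensor factor: `e11 · v_k = ((m-2k)/2) v_k`. -/
def E11 (s : Fin n) : Module.End ℂ (TV m) :=
  mulShift (fun idx => ((m s : ℂ) - 2 * ((idx s : ℕ) : ℂ)) / 2) id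

/-- `e22` acting in the `s`-th tensor factor: `e22 · v_k = -((m-2k)/2) v_k`. -/
def E22 (s : Fin n) : Module.End ℂ (TV m) :=
  mulShift (fun idx => -(((m s : ℂ) - 2 * ((idx s : ℕ) : ℂ)) / 2)) id

/-- `e21` acting in the `s`-th tensor factor: `e21 · v_k = (k+1) v_{k+1}`. -/
def E21 (s : Fin n) : Module.End ℂ (TV m) :=
  mulShift (fun idx => ((idx s : ℕ) : ℂ)) (fun idx => Function.update idx s (idx s - 1))

/-- `e12` acting in the `s`-th tensor factor: `e12 · v_k = (m-k+1) v_{k-1}`. -/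
def E12 (s : Fin n) : Module.End ℂ (TV m) :=
  mulShift (fun idx => (m s : ℂ) - ((idx s : ℕ) : ℂ)) (fun idx => Function.update idx s (idx s + 1))

/-- The diagonal action `e11 = Σ_s e11^{(s)}` on the tensor product. -/
def e11T : Module.End ℂ (TV m) := ∑ s, E11 m s
def e22T : Module.End ℂ (TV m) := ∑ s, E22 m s
def e21T : Module.End ℂ (TV m) := ∑ s, E21 m s
def e12T : Module.End ℂ (TV m) := ∑ s, E12 m s

/-- `v ∈ V[ν]`, i.e. `(e11 - e22) v = ν v`. -/
def inWt (ν : ℤ) (v : TV m) : Prop := (e11T m - e22T m) v = ((ν : ℤ) : ℂ) • v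

/-- The Weyl involution `σ`, acting by `σ v_k = (-1)^k v_{m-k}` in each factor. -/
def sigmaOp : Module.End ℂ (TV m) :=
  mulShift (fun idx => ∏ s, (-1 : ℂ) ^ (m s - (idx s : ℕ))) (fun idx s => (idx s).rev)

/-- The weight of a basis vector: `wt(i) = Σ_s (m_s - 2 i_s)`. -/
def wt (idx : Idx m) : ℤ := ∑ s, ((m s : ℤ) - 2 * ((idx s : ℕ) : ℤ))

/-- The operator `p(κ) = Σ_{k ≥ 0} e21^k e12^k (1/k!) Π_{j=0}^{k-1} (κ + e22 - e11 - j)^{-1}`.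
The operator `e22 - e11` is diagonal in the chosen basis with eigenvalue `-wt(idx)` on the
basis vector labelled by `idx`, so the (partial) inverses `(κ + e22 - e11 - j)^{-1}` are the
diagonal operators with entries `(κ - wt(idx) - j)⁻¹`.  The sum is finite on `V` since
`e12` is nilpotent:  `e12^k = 0` for `k > M = Σ_s m_s`. -/
def pOp (κ : ℂ) : Module.End ℂ (TV m) :=
  ∑ k ∈ Finset.range ((∑ s, m s) + 1),
    (e21T m) ^ k * (e12T m) ^ k *
      mulShift (fun idx => ((k.factorial : ℂ))⁻¹ *
        ∏ j ∈ Finset.range k, (κ - ((wt m idx : ℤ) : ℂ) - (j : ℂ))⁻¹) id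

/-- The operator `𝒜(κ) = σ ∘ p(κ)`. -/
def Aop (κ : ℂ) : Module.End ℂ (TV m) := sigmaOp m * pOp m κ

/-- `Ω₀^{(s,t)} = e11^{(s)} e11^{(t)} + e22^{(s)} e22^{(t)}`. -/
def Om0 (s t : Fin n) : Module.End ℂ (TV m) := E11 m s * E11 m t + E22 m s * E22 m t

/-- `Ω₁₂^{(s,t)} = e12^{(s)} e21^{(t)}`. -/
def Om12 (s t : Fin n) : Module.End ℂ (TV m) := E12 m s * E21 m t

/-- `Ω₂₁^{(s,t)} = e21^{(s)} e12^{(t)}`. -/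
def Om21 (s t : Fin n) : Module.End ℂ (TV m) := E21 m s * E12 m t

/-- The trigonometric r-matrix `r^{(s,t)}(x) = (Ω₊ x + Ω₋)/(x-1)` acting in the `s`-th and
`t`-th tensor factors, where `Ω₊ = ½Ω₀ + Ω₁₂` and `Ω₋ = ½Ω₀ + Ω₂₁`. -/
def rOp (s t : Fin n) (x : ℂ) : Module.End ℂ (TV m) :=
  (x - 1)⁻¹ • (x • ((2 : ℂ)⁻¹ • Om0 m s t + Om12 m s t) + ((2 : ℂ)⁻¹ • Om0 m s t + Om21 m s t))

/-- The trigonometric Gaudin operators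
`K_s(z,μ) = (μ/2)(e11-e22)^{(s)} + Σ_{t ≠ s} r^{(s,t)}(z_s/z_t)`. -/
def Kop (z : Fin n → ℂ) (μ : ℂ) (s : Fin n) : Module.End ℂ (TV m) :=
  (μ / 2) • (E11 m s - E22 m s) + ∑ t ∈ Finset.univ.erase s, rOp m s t (z s / z t)

/-- The matrix entry `M₁₁(x) = 2πi Σ_s (1-x/z_s)⁻¹ e11^{(s)} - πi e11`. -/
def M11 (z : Fin n → ℂ) (x : ℂ) : Module.End ℂ (TV m) :=
  (2 * (Real.pi : ℂ) * I) • (∑ s, (1 - x / z s)⁻¹ • E11 m s) - ((Real.pi : ℂ) * I) • e11T m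

/-- `M₁₂(x) = 2πi Σ_s (1-x/z_s)⁻¹ e21^{(s)} - 2πi e21`. -/
def M12 (z : Fin n → ℂ) (x : ℂ) : Module.End ℂ (TV m) :=
  (2 * (Real.pi : ℂ) * I) • (∑ s, (1 - x / z s)⁻¹ • E21 m s) -
    (2 * (Real.pi : ℂ) * I) • e21T m

/-- `M₂₁(x) = 2πi Σ_s (1-x/z_s)⁻¹ e12^{(s)}`. -/
def M21 (z : Fin n → ℂ) (x : ℂ) : Module.End ℂ (TV m) :=
  (2 * (Real.pi : ℂ) * I) • (∑ s, (1 - x / z s)⁻¹ • E12 m s)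

/-- `M₂₂(x) = 2πi Σ_s (1-x/z_s)⁻¹ e22^{(s)} - πi e22`. -/
def M22 (z : Fin n → ℂ) (x : ℂ) : Module.End ℂ (TV m) :=
  (2 * (Real.pi : ℂ) * I) • (∑ s, (1 - x / z s)⁻¹ • E22 m s) - ((Real.pi : ℂ) * I) • e22T m

/-- The derivative `(dM₂₂/dx)(x) = 2πi Σ_s z_s⁻¹ (1-x/z_s)⁻² e22^{(s)}`. -/
def M22d (z : Fin n → ℂ) (x : ℂ) : Module.End ℂ (TV m) :=
  (2 * (Real.pi : ℂ) * I) • (∑ s, ((z s)⁻¹ * ((1 - x / z s)⁻¹) ^ 2) • E22 m s)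

/-- The coefficient `D₂(x)` of the universal differential operator
`𝒟 = cdet [[∂_u - πiμ + M₁₁, M₁₂],[M₂₁, ∂_u + πiμ + M₂₂]] = ∂_u² + D₁(x) ∂_u + D₂(x)`
(where `x = e^{-2πiu}`, `∂_u = -2πi x ∂_x`), namely
`D₂(x) = (-πiμ + M₁₁(x)) ∘ (πiμ + M₂₂(x)) - 2πi x (dM₂₂/dx)(x) - M₂₁(x) ∘ M₁₂(x)`. -/
def D2 (z : Fin n → ℂ) (μ : ℂ) (x : ℂ) : Module.End ℂ (TV m) :=
  (-(((Real.pi : ℂ) * I * μ)) • (1 : Module.End ℂ (TV m)) + M11 m z x) *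
      ((((Real.pi : ℂ) * I * μ)) • (1 : Module.End ℂ (TV m)) + M22 m z x)
    - (2 * (Real.pi : ℂ) * I * x) • M22d m z x
    - M21 m z x * M12 m z x

/-- The Bethe ansatz equations for the triple `(z; μ; V[ν])`, `ν = M - 2m'`:  `t` is a tuple
of pairwise distinct complex numbers, each nonzero and distinct from every `z_s`, with
`(1 - μ + ν/2)/t_i + Σ_{j≠i} 2/(t_i - t_j) - Σ_s m_s/(t_i - z_s) = 0` for all `i`. -/
def BAE (z : Fin n → ℂ) (μ : ℂ) {m' : ℕ} (t : Fin m' → ℂ) : Prop :=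
  Function.Injective t ∧ (∀ i, t i ≠ 0) ∧ (∀ i s, t i ≠ z s) ∧
    ∀ i, (1 - μ + ((∑ s, (m s : ℂ)) - 2 * (m' : ℂ)) / 2) / t i
        + (∑ j ∈ Finset.univ.erase i, 2 / (t i - t j))
        - ∑ s, (m s : ℂ) / (t i - z s) = 0

/-- The partial sum `ℓ_1 + ⋯ + ℓ_{s-1}` (0-based). -/
def pref (ℓv : Idx m) (s : Fin n) : ℕ :=
  ∑ u ∈ Finset.univ.filter (fun u => u < s), (ℓv u : ℕ)

/-- Extension of a tuple `t : Fin m' → ℂ` to a function on `ℕ` (by zero). -/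
def extt {m' : ℕ} (t : Fin m' → ℂ) : ℕ → ℂ := fun i => if h : i < m' then t ⟨i, h⟩ else 0

/-- The coordinate `ω_ℓ(t,z) = Σ_{ρ ∈ S_{m'}} Π_{s=1}^n Π_{i=ℓ_1+⋯+ℓ_{s-1}+1}^{ℓ_1+⋯+ℓ_s}
(t_{ρ(i)} - z_s)⁻¹` of the weight function. -/
def omegaCoeff (z : Fin n → ℂ) {m' : ℕ} (t : Fin m' → ℂ) (ℓv : Idx m) : ℂ :=
  ∑ ρ : Equiv.Perm (Fin m'), ∏ s : Fin n,
    ∏ i ∈ Finset.Ico (pref m ℓv s) (pref m ℓv s + (ℓv s : ℕ)), (extt (t ∘ ρ) i - z s)⁻¹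

/-- The Bethe vector (weight function) `ω(t,z) = Σ_{ℓ ∈ C} ω_ℓ(t,z) v_ℓ ∈ V[M - 2m']`. -/
def betheVec (z : Fin n → ℂ) {m' : ℕ} (t : Fin m' → ℂ) : TV m :=
  fun ℓv => if (∑ s, ((ℓv s : ℕ))) = m' then omegaCoeff m z t ℓv else 0

/-- The eigenvalue `k_s(t,z,μ) = (m_s/2)[(μ - ν/2 + m_s/2) + Σ_{p≠s} m_p z_s/(z_s-z_p)
+ 2 Σ_i z_s/(t_i - z_s)]`, with `ν = M - 2m'`. -/
def kEig (z : Fin n → ℂ) (μ : ℂ) {m' : ℕ} (t : Fin m' → ℂ) (s : Fin n) : ℂ :=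
  ((m s : ℂ) / 2) * ((μ - ((∑ u, (m u : ℂ)) - 2 * (m' : ℂ)) / 2 + (m s : ℂ) / 2)
    + (∑ p ∈ Finset.univ.erase s, (m p : ℂ) * z s / (z s - z p))
    + 2 * ∑ i, z s / (t i - z s))

/-- The scalar eigenvalue function `E₂(x, t, z, μ)` of `D₂(x)` on the Bethe vector, i.e.
the coefficient of the fundamental differential operator `ℰ = ∂_u² + E₂(x)`. -/
def E2fun (z : Fin n → ℂ) (μ : ℂ) {m' : ℕ} (t : Fin m' → ℂ) (x : ℂ) : ℂ :=
  (2 * (Real.pi : ℂ) * I) ^ 2 *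
    (-(μ + ((∑ u, (m u : ℂ)) - 2 * (m' : ℂ)) / 2) ^ 2 / 4
      + ∑ s, (((m s : ℂ) * ((m s : ℂ) + 2) / 4 + kEig m z μ t s) / (1 - x / z s)
          - ((m s : ℂ) * ((m s : ℂ) + 2) / 4) / (1 - x / z s) ^ 2))



/-- `Σ_{s,t=1}^n Ω₀^{(s,t)}` (for `s = t` both operators compose in the `s`-th factor). -/
noncomputable def OmSum0 (n : ℕ) (m : Fin n → ℕ) : Module.End ℂ (TV m) :=
  ∑ s, ∑ t, Om0 m s t

/-- `Σ_{s,t=1}^n (Ω₁₂^{(s,t)} + Ω₂₁^{(s,t)})`. -/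
noncomputable def OmSum1221 (n : ℕ) (m : Fin n → ℕ) : Module.End ℂ (TV m) :=
  ∑ s, ∑ t, (Om12 m s t + Om21 m s t)

/-- The coefficientwise form of the eigenvalue equation `H₀ ψ = ε ψ` for the trigonometric
KZB operator `H₀` applied to `ψ = e^{πiμλ} Σ_{k≥0} Λ^k ψ^k` (`λ = λ₁-λ₂`, `Λ = e^{-2πiλ}`),
using `∂_{λ₁}² + ∂_{λ₂}² = 2∂_λ²` on such functions and `1/sin²(πλ) = -4Σ_{j≥1} jΛ^j`:
for all `k ≥ 0`,
`(πi/2)(μ-2k)² ψ^k + (πi/8)(Σ_{s,t} Ω₀^{(s,t)}) ψ^k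
 - πi Σ_{j=1}^k j (Σ_{s,t}(Ω₁₂^{(s,t)} + Ω₂₁^{(s,t)})) ψ^{k-j} = ε ψ^k`. -/
def EigSystem (n : ℕ) (m : Fin n → ℕ) (μ : ℂ) (v : TV m) (ψ : ℕ → TV m) (ε : ℂ) : Prop :=
  (∀ k, inWt m 0 (ψ k)) ∧ ψ 0 = v ∧
    ∀ k : ℕ,
      (((Real.pi : ℂ) * Complex.I / 2) * (μ - 2 * (k : ℂ)) ^ 2) • ψ k
        + ((Real.pi : ℂ) * Complex.I / 8) • OmSum0 n m (ψ k)
        - ((Real.pi : ℂ) * Complex.I) •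
            ∑ j ∈ Finset.Icc 1 k, (j : ℂ) • OmSum1221 n m (ψ (k - j))
      = ε • ψ k


/-! ### Auxiliary material for the proof of Statement 17 -/

lemma mulShift_apply {ι : Type*} (c : ι → ℂ) (g : ι → ι) (f : ι → ℂ) (i : ι) :
    mulShift c g f i = c i * f (g i) := rfl

/-- Support condition: `w` is supported on basis indices of weight `ν`. -/
def Qwt (ν : ℤ) (w : TV m) : Prop := ∀ idx, wt m idx ≠ ν → w idx = 0

lemma wt_update (idx : Idx m) (s : Fin n) (b : Fin (m s + 1)) :
    wt m (Function.update idx s b) =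
      wt m idx + 2 * ((idx s : ℕ) : ℤ) - 2 * ((b : ℕ) : ℤ) := by
  unfold wt
  rw [← Finset.add_sum_erase _ _ (Finset.mem_univ s),
      ← Finset.add_sum_erase _ (fun u => (m u : ℤ) - 2 * ((idx u : ℕ) : ℤ)) (Finset.mem_univ s)]
  have hrest : ∑ u ∈ Finset.univ.erase s,
      ((m u : ℤ) - 2 * (((Function.update idx s b u) : ℕ) : ℤ))
      = ∑ u ∈ Finset.univ.erase s, ((m u : ℤ) - 2 * ((idx u : ℕ) : ℤ)) :=
    Finset.sum_congr rfl fun u hu => by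
      rw [Function.update_of_ne (Finset.ne_of_mem_erase hu)]
  rw [hrest, Function.update_self]
  ring

lemma Qwt_E12 {ν : ℤ} {w : TV m} (h : Qwt m ν w) (s : Fin n) :
    Qwt m (ν + 2) (E12 m s w) := by
  intro idx hidx
  simp only [E12, mulShift_apply]
  by_cases hc : (idx s : ℕ) = m s
  · rw [hc, sub_self, zero_mul]
  · have hlt : (idx s : ℕ) < m s := lt_of_le_of_ne (Fin.is_le _) hc
    have hval : ((idx s + 1 : Fin (m s + 1)) : ℕ) = (idx s : ℕ) + 1 :=
      Fin.val_add_one_of_lt (by rw [Fin.lt_iff_val_lt_val, Fin.val_last]; exact hlt)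
    have h0 : w (Function.update idx s (idx s + 1)) = 0 := by
      apply h
      rw [wt_update, hval]
      push_cast
      omega
    rw [h0, mul_zero]

lemma Qwt_E21 {ν : ℤ} {w : TV m} (h : Qwt m ν w) (s : Fin n) :
    Qwt m (ν - 2) (E21 m s w) := by
  intro idx hidx
  simp only [E21, mulShift_apply]
  by_cases hc : (idx s : ℕ) = 0
  · rw [hc, Nat.cast_zero, zero_mul]
  · have hne : idx s ≠ 0 := by
      intro h0
      exact hc (by rw [h0]; rfl)
    have hval : ((idx s - 1 : Fin (m s + 1)) : ℕ) = (idx s : ℕ) - 1 := by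
      rw [Fin.coe_sub_one, if_neg hne]
    have h0 : w (Function.update idx s (idx s - 1)) = 0 := by
      apply h
      rw [wt_update, hval]
      omega
    rw [h0, mul_zero]

lemma Qwt_Om12 {w : TV m} (h : Qwt m 0 w) (s t : Fin n) : Qwt m 0 (Om12 m s t w) := by
  have h2 := Qwt_E12 m (Qwt_E21 m h t) s
  norm_num at h2
  exact h2

lemma Qwt_Om21 {w : TV m} (h : Qwt m 0 w) (s t : Fin n) : Qwt m 0 (Om21 m s t w) := by
  have h2 := Qwt_E21 m (Qwt_E12 m h t) s
  norm_num at h2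
  exact h2

lemma Qwt_smul {ν : ℤ} {w : TV m} (c : ℂ) (h : Qwt m ν w) : Qwt m ν (c • w) :=
  fun idx hidx => by simp [h idx hidx]

lemma Qwt_sum {ν : ℤ} {ι : Type*} (S : Finset ι) (f : ι → TV m)
    (h : ∀ i ∈ S, Qwt m ν (f i)) : Qwt m ν (∑ i ∈ S, f i) :=
  fun idx hidx => by
    rw [Finset.sum_apply]
    exact Finset.sum_eq_zero fun i hi => h i hi idx hidx

lemma Qwt_OmSum1221 {w : TV m} (h : Qwt m 0 w) : Qwt m 0 (OmSum1221 n m w) := by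
  intro idx hidx
  have hexp : OmSum1221 n m w idx
      = ∑ s, ∑ t, ((Om12 m s t w) idx + (Om21 m s t w) idx) := by
    simp [OmSum1221, LinearMap.sum_apply, Finset.sum_apply, LinearMap.add_apply]
  rw [hexp]
  refine Finset.sum_eq_zero fun s _ => Finset.sum_eq_zero fun t _ => ?_
  rw [Qwt_Om12 m h s t idx hidx, Qwt_Om21 m h s t idx hidx, add_zero]

lemma wt_cast (idx : Idx m) :
    ((wt m idx : ℤ) : ℂ) = ∑ s, ((m s : ℂ) - 2 * ((idx s : ℕ) : ℂ)) := by
  unfold wt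
  push_cast
  rfl

lemma diag_apply (w : TV m) (idx : Idx m) :
    ((e11T m - e22T m) w) idx = ((wt m idx : ℤ) : ℂ) * w idx := by
  rw [wt_cast]
  simp only [LinearMap.sub_apply, Pi.sub_apply, e11T, e22T, LinearMap.sum_apply,
    Finset.sum_apply, E11, E22, mulShift_apply, id_eq]
  rw [Finset.sum_mul, ← Finset.sum_sub_distrib]
  exact Finset.sum_congr rfl fun s _ => by ring

lemma inWt_zero_iff (w : TV m) : inWt m 0 w ↔ Qwt m 0 w := by
  unfold inWt
  rw [Int.cast_zero, zero_smul]
  constructor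
  · intro h idx hidx
    have h2 := congrFun h idx
    rw [diag_apply, Pi.zero_apply] at h2
    have hc : ((wt m idx : ℤ) : ℂ) ≠ 0 := Int.cast_ne_zero.mpr hidx
    exact (mul_eq_zero.mp h2).resolve_left hc
  · intro h
    funext idx
    rw [Pi.zero_apply, diag_apply]
    by_cases hz : wt m idx = 0
    · rw [hz]; simp
    · rw [h idx hz, mul_zero]

lemma OmSum0_eq_zero {w : TV m} (h : Qwt m 0 w) : OmSum0 n m w = 0 := by
  funext idx
  rw [Pi.zero_apply]
  have hexp : OmSum0 n m w idx = ∑ s, ∑ t,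
      ((((m s : ℂ) - 2 * ((idx s : ℕ) : ℂ)) / 2) *
        (((((m t : ℂ) - 2 * ((idx t : ℕ) : ℂ)) / 2)) * (2 * w idx))) := by
    simp only [OmSum0, LinearMap.sum_apply, Finset.sum_apply]
    refine Finset.sum_congr rfl fun s _ => Finset.sum_congr rfl fun t _ => ?_
    simp only [Om0, LinearMap.add_apply, Module.End.mul_apply, E11, E22, mulShift_apply,
      id_eq, Pi.add_apply]
    ring
  rw [hexp]
  by_cases hz : wt m idx = 0
  · have hsum : ∑ s, (((m s : ℂ) - 2 * ((idx s : ℕ) : ℂ)) / 2) = 0 := by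
      rw [← Finset.sum_div, ← wt_cast m idx, hz]
      simp
    have key : (∑ s, ∑ t,
        ((((m s : ℂ) - 2 * ((idx s : ℕ) : ℂ)) / 2) *
          (((((m t : ℂ) - 2 * ((idx t : ℕ) : ℂ)) / 2)) * (2 * w idx))))
        = (∑ s, (((m s : ℂ) - 2 * ((idx s : ℕ) : ℂ)) / 2)) *
          (∑ t, (((((m t : ℂ) - 2 * ((idx t : ℕ) : ℂ)) / 2)) * (2 * w idx))) := by
      rw [Finset.sum_mul]
      exact Finset.sum_congr rfl fun s _ => by rw [Finset.mul_sum]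
    rw [key, hsum, zero_mul]
  · rw [h idx hz]
    simp

/-- The unique solution of the recursion, defined by strong recursion. -/
def psiD (μ : ℂ) (v : TV m) : ℕ → TV m
  | 0 => v
  | (k+1) => (2 * ((k : ℂ) + 1) * (((k : ℂ) + 1) - μ))⁻¹ •
      ∑ j ∈ Finset.range (k+1), ((j : ℂ) + 1) • OmSum1221 n m (psiD μ v (k - j))
  termination_by k => k
  decreasing_by omega

lemma psiD_zero (μ : ℂ) (v : TV m) : psiD m μ v 0 = v := by
  rw [psiD]

lemma psiD_succ (μ : ℂ) (v : TV m) (k : ℕ) :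
    psiD m μ v (k+1) = (2 * ((k : ℂ) + 1) * (((k : ℂ) + 1) - μ))⁻¹ •
      ∑ j ∈ Finset.range (k+1), ((j : ℂ) + 1) • OmSum1221 n m (psiD m μ v (k - j)) := by
  rw [psiD]

lemma Icc_sum_eq (f : ℕ → TV m) (k : ℕ) :
    ∑ j ∈ Finset.Icc 1 (k+1), (j : ℂ) • OmSum1221 n m (f (k+1-j))
      = ∑ j ∈ Finset.range (k+1), ((j : ℂ) + 1) • OmSum1221 n m (f (k-j)) := by
  rw [← Finset.Ico_add_one_right_eq_Icc, Finset.sum_Ico_eq_sum_range]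
  have hn : k + 1 + 1 - 1 = k + 1 := by omega
  rw [hn]
  refine Finset.sum_congr rfl fun i hi => ?_
  rw [show 1 + i = i + 1 from Nat.add_comm 1 i, show k + 1 - (i+1) = k - i from by omega]
  push_cast
  rfl

lemma psiD_mem (μ : ℂ) (v : TV m) (hv : Qwt m 0 v) : ∀ k, Qwt m 0 (psiD m μ v k)
  | 0 => by rw [psiD_zero]; exact hv
  | (k+1) => by
      rw [psiD_succ]
      apply Qwt_smul
      apply Qwt_sum
      intro j hj
      apply Qwt_smul
      apply Qwt_OmSum1221
      exact psiD_mem μ v hv (k - j)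
  termination_by k => k
  decreasing_by omega

lemma cfac_ne {μ : ℂ} (hμ : ∀ k : ℕ, 0 < k → μ ≠ (k : ℂ)) (k : ℕ) :
    (2 * ((k : ℂ) + 1) * (((k : ℂ) + 1) - μ)) ≠ 0 := by
  have h1 : ((k : ℂ) + 1) ≠ 0 := Nat.cast_add_one_ne_zero k
  have h2 : (((k : ℂ) + 1) - μ) ≠ 0 := by
    intro hz
    have h3 := hμ (k+1) (Nat.succ_pos k)
    apply h3
    have h4 : ((k : ℂ) + 1) = μ := sub_eq_zero.mp hz
    push_cast
    exact h4.symm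
  exact mul_ne_zero (mul_ne_zero two_ne_zero h1) h2

lemma piI_ne : ((Real.pi : ℂ) * Complex.I) ≠ 0 :=
  mul_ne_zero (Complex.ofReal_ne_zero.mpr Real.pi_ne_zero) Complex.I_ne_zero

lemma rearrange {W : Type*} [AddCommGroup W] [Module ℂ W]
    {A ε pI c : ℂ} (hAε : A - ε = pI * c) (hc : c ≠ 0) (S : W) :
    A • (c⁻¹ • S) - pI • S = ε • (c⁻¹ • S) := by
  rw [smul_smul, smul_smul, ← sub_smul]
  congr 1
  have hA : A = ε + pI * c := by linear_combination hAε
  rw [hA, add_mul, mul_assoc, mul_inv_cancel₀ hc, mul_one, add_sub_cancel_right]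

lemma eig_exists (μ : ℂ) (hμ : ∀ k : ℕ, 0 < k → μ ≠ (k : ℂ)) (v : TV m)
    (hv : Qwt m 0 v) :
    EigSystem n m μ v (psiD m μ v) ((Real.pi : ℂ) * Complex.I * μ ^ 2 / 2) := by
  refine ⟨fun k => (inWt_zero_iff m _).mpr (psiD_mem m μ v hv k), psiD_zero m μ v,
    fun k => ?_⟩
  rcases k with _ | k
  · rw [psiD_zero, Finset.Icc_eq_empty (by omega), Finset.sum_empty, smul_zero, sub_zero,
      OmSum0_eq_zero m hv, smul_zero, add_zero]
    congr 1
    push_cast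
    ring
  · rw [OmSum0_eq_zero m (psiD_mem m μ v hv (k+1)), smul_zero, add_zero,
      Icc_sum_eq, psiD_succ]
    push_cast
    refine rearrange ?_ (cfac_ne hμ k) _
    ring

lemma eig_unique (μ : ℂ) (hμ : ∀ k : ℕ, 0 < k → μ ≠ (k : ℂ)) (v : TV m)
    (hv0 : v ≠ 0) {ψ : ℕ → TV m} {ε : ℂ} (hsys : EigSystem n m μ v ψ ε) :
    ε = (Real.pi : ℂ) * Complex.I * μ ^ 2 / 2 ∧ ψ = psiD m μ v := by
  obtain ⟨hwt, hψ0, heq⟩ := hsys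
  have h0 := heq 0
  rw [Finset.Icc_eq_empty (by omega), Finset.sum_empty, smul_zero, sub_zero,
    OmSum0_eq_zero m ((inWt_zero_iff m _).mp (hwt 0)), smul_zero, add_zero, hψ0] at h0
  have hε : ε = (Real.pi : ℂ) * Complex.I * μ ^ 2 / 2 := by
    have h1 : (((Real.pi : ℂ) * Complex.I / 2) * (μ - 2 * ((0 : ℕ) : ℂ)) ^ 2 - ε) • v = 0 := by
      rw [sub_smul, h0, sub_self]
    have h2 := (smul_eq_zero.mp h1).resolve_right hv0
    have h3 := sub_eq_zero.mp h2
    rw [← h3]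
    push_cast
    ring
  refine ⟨hε, funext fun k => ?_⟩
  induction k using Nat.strong_induction_on with
  | _ k ih =>
    rcases k with _ | k
    · rw [hψ0, psiD_zero]
    · have hk := heq (k+1)
      rw [OmSum0_eq_zero m ((inWt_zero_iff m _).mp (hwt (k+1))), smul_zero, add_zero,
        hε] at hk
      have hS : ∑ j ∈ Finset.Icc 1 (k+1), (j : ℂ) • OmSum1221 n m (ψ (k+1-j))
          = ∑ j ∈ Finset.Icc 1 (k+1), (j : ℂ) • OmSum1221 n m (psiD m μ v (k+1-j)) := by
        refine Finset.sum_congr rfl fun j hj => ?_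
        rw [ih (k+1-j) (by rw [Finset.mem_Icc] at hj; omega)]
      rw [hS, Icc_sum_eq] at hk
      push_cast at hk
      set S := ∑ j ∈ Finset.range (k+1), ((j : ℂ) + 1) • OmSum1221 n m (psiD m μ v (k - j))
        with hSdef
      set c : ℂ := 2 * ((k : ℂ) + 1) * (((k : ℂ) + 1) - μ) with hcdef
      have hc : c ≠ 0 := cfac_ne hμ k
      have hAε : ((Real.pi : ℂ) * Complex.I / 2) * (μ - 2 * ((k : ℂ) + 1)) ^ 2
          - (Real.pi : ℂ) * Complex.I * μ ^ 2 / 2 = ((Real.pi : ℂ) * Complex.I) * c := by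
        rw [hcdef]; ring
      have h1 : (((Real.pi : ℂ) * Complex.I) * c) • ψ (k+1)
          = ((Real.pi : ℂ) * Complex.I) • S := by
        rw [← hAε, sub_smul]
        have h2 := sub_eq_iff_eq_add.mp hk
        rw [h2]
        abel
      have hπc : ((Real.pi : ℂ) * Complex.I) * c ≠ 0 := mul_ne_zero piI_ne hc
      have h2 : ψ (k+1) = ((((Real.pi : ℂ) * Complex.I) * c)⁻¹ *
          ((Real.pi : ℂ) * Complex.I)) • S := by
        rw [← smul_smul, ← h1, smul_smul, inv_mul_cancel₀ hπc, one_smul]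
      have h3 : ((((Real.pi : ℂ) * Complex.I) * c)⁻¹ * ((Real.pi : ℂ) * Complex.I)) = c⁻¹ := by
        rw [mul_inv_rev, mul_assoc, inv_mul_cancel₀ piI_ne, mul_one]
      rw [h2, h3, psiD_succ m μ v k]

/-- Theorem 3.2 of the paper, after [FV2].  Assume `M` is even and
`μ ∉ ℤ_{>0}`.  Then for every nonzero `v ∈ V[0]` there exist a unique sequence
`(ψ^k)_{k≥0}` in `V[0]` with `ψ^0 = v` and a unique constant `ε` satisfying the
coefficientwise eigenvalue system; moreover `ε = πiμ²/2`. -/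
theorem statement17
    (n : ℕ) (hn : 1 < n) (m : Fin n → ℕ) (hm : ∀ s, 0 < m s)
    (M : ℕ) (hM : M = ∑ s, m s) (hMeven : Even M)
    (μ : ℂ) (hμ : ∀ k : ℕ, 0 < k → μ ≠ (k : ℂ))
    (v : TV m) (hv : inWt m 0 v) (hv0 : v ≠ 0) :
    (∃! p : (ℕ → TV m) × ℂ, EigSystem n m μ v p.1 p.2) ∧
    (∀ ψ : ℕ → TV m, ∀ ε : ℂ, EigSystem n m μ v ψ ε →
      ε = (Real.pi : ℂ) * Complex.I * μ ^ 2 / 2) := by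
  have hvQ : Qwt m 0 v := (inWt_zero_iff m v).mp hv
  constructor
  · refine ⟨(psiD m μ v, (Real.pi : ℂ) * Complex.I * μ ^ 2 / 2),
      eig_exists m μ hμ v hvQ, ?_⟩
    rintro ⟨ψ, ε⟩ hsys
    obtain ⟨hε, hψ⟩ := eig_unique m μ hμ v hv0 hsys
    exact Prod.ext hψ hε
  · intro ψ ε hsys
    exact (eig_unique m μ hμ v hv0 hsys).1


end
end Paper
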